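/- Let ∃x₁…x_m ∀y₁…y_k φ(x, y) be a quantified Boolean formula with φ in 3-DNF, let TA be the associated sketch threshold automaton with indeterminates v₁, …, v_m, and let ψ = F G (φ' ⇒ ({ℓ_{y_k}} = 0)) ∧ G ({ℓ_F} = 0) be the associated ELTL_FT specification. Then ∃x₁…x_m ∀y₁…y_k φ(x, y) is true if and only if there exists an assignment μ: {v₁, …, v_m} → ℚ such that every infinite path of TA[μ] starting from an initial configuration satisfies ¬ψ; moreover, in that case μ can be taken with values in {0, 1}. -/

import Mathlib

/-!
Threshold automata (Konnov, Veith, Widder), following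
"Complexity of Verification and Synthesis of Threshold Automata".
-/

/-- A threshold guard `x ⋈ a₀ + a₁·p₁ + … + a_{|Π|}·p_{|Π|}` over shared variables `V` and
parameters `P`.  `isRise = true` means a *rise* guard `x ≥ …`, and `isRise = false` means a
*fall* guard `x < …`. -/
structure TGuard (V P : Type) where
  var : V
  isRise : Bool
  a0 : ℚ
  coef : P → ℚ

/-- A configuration `σ = (κ, g, p)`: numbers of processes in each location, values of the
shared variables, and values of the parameters. -/
structure Config (L V P : Type) where
  κ : L → ℕ
  g : V → ℕ
  p : P → ℕ

/-- A rule of a threshold automaton: source and target locations, a guard that is a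
(finite) conjunction of threshold guards, and an update `V → {0,1}`. -/
structure TRule (L V P : Type) where
  src : L
  dst : L
  guard : List (TGuard V P)
  upd : V → ℕ
  upd_le_one : ∀ v, upd v ≤ 1

/-- A threshold automaton `(L, I, Γ, R)` together with its environment `(Π, RC, N)`.
`L`, `V`, `P` are the types of locations, shared variables and parameters, and `R` is the
index type of rules. -/
structure TA (L V P R : Type) where
  initial : Set L
  initial_nonempty : initial.Nonempty
  rc : Set (P → ℕ)
  N : (P → ℕ) → ℕ
  rule : R → TRule L V P

variable {L V P R : Type}

/-- Satisfaction of a threshold guard by values `g` of the shared variables and `p` of the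
parameters. -/
def TGuard.holds [Fintype P] (φ : TGuard V P) (g : V → ℕ) (p : P → ℕ) : Prop :=
  if φ.isRise then φ.a0 + ∑ i : P, φ.coef i * (p i : ℚ) ≤ (g φ.var : ℚ)
  else (g φ.var : ℚ) < φ.a0 + ∑ i : P, φ.coef i * (p i : ℚ)

/-- A configuration enables a rule. -/
def TRule.enabledAt [Fintype P] (r : TRule L V P) (σ : Config L V P) : Prop :=
  0 < σ.κ r.src ∧ ∀ φ ∈ r.guard, φ.holds σ.g σ.p

/-- The result of firing a rule at a configuration. -/
def TRule.fire [DecidableEq L] (r : TRule L V P) (σ : Config L V P) : Config L V P where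
  κ := fun ℓ => σ.κ ℓ + (if ℓ = r.dst then 1 else 0) - (if ℓ = r.src then 1 else 0)
  g := fun v => σ.g v + r.upd v
  p := σ.p

namespace TA

variable [Fintype P] [DecidableEq L]

/-- `σ` is a configuration of `ta`: the parameters satisfy the resilience condition and the
total number of processes is `N(p)`. -/
def validConfig [Fintype L] (ta : TA L V P R) (σ : Config L V P) : Prop :=
  σ.p ∈ ta.rc ∧ ∑ ℓ : L, σ.κ ℓ = ta.N σ.p

/-- Initial configurations. -/
def isInitial [Fintype L] (ta : TA L V P R) (σ : Config L V P) : Prop :=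
  ta.validConfig σ ∧ (∀ ℓ, ℓ ∉ ta.initial → σ.κ ℓ = 0) ∧ ∀ v, σ.g v = 0

/-- A schedule (finite sequence of rules) is applicable to a configuration. -/
def applicable (ta : TA L V P R) : Config L V P → List R → Prop
  | _, [] => True
  | σ, r :: τ => (ta.rule r).enabledAt σ ∧ ta.applicable ((ta.rule r).fire σ) τ

/-- The configuration `τ(σ)` resulting from applying a schedule. -/
def apply (ta : TA L V P R) : Config L V P → List R → Config L V P
  | σ, [] => σ
  | σ, r :: τ => ta.apply ((ta.rule r).fire σ) τ

/-- The configurations visited by the path from `σ` along `τ` (including both endpoints). -/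
def visited (ta : TA L V P R) : Config L V P → List R → List (Config L V P)
  | σ, [] => [σ]
  | σ, r :: τ => σ :: ta.visited ((ta.rule r).fire σ) τ

/-- Reachability `σ →* σ'`. -/
def reaches (ta : TA L V P R) (σ σ' : Config L V P) : Prop :=
  ∃ τ : List R, ta.applicable σ τ ∧ ta.apply σ τ = σ'

/-- The set of all threshold guards occurring in rules of the automaton. -/
def guards (ta : TA L V P R) : Set (TGuard V P) :=
  {φ | ∃ r : R, φ ∈ (ta.rule r).guard}

/-- The context `ω(σ)`: rise guards of `ta` that are true in `σ` together with fall guards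
of `ta` that are false in `σ`. -/
def context (ta : TA L V P R) (σ : Config L V P) : Set (TGuard V P) :=
  {φ | φ ∈ ta.guards ∧ if φ.isRise then φ.holds σ.g σ.p else ¬ φ.holds σ.g σ.p}

/-- A schedule applicable at `σ` is steady if all configurations visited by the
corresponding path have the same context. -/
def steady (ta : TA L V P R) (σ : Config L V P) (τ : List R) : Prop :=
  ∀ σ' ∈ ta.visited σ τ, ta.context σ' = ta.context σ

end TA

namespace TA

variable [Fintype P] [DecidableEq L]

/-- The configuration reached after the first `n` steps of the infinite schedule `ρ`. -/
def run (ta : TA L V P R) (σ : Config L V P) (ρ : ℕ → R) (n : ℕ) : Config L V P :=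
  ta.apply σ ((List.range n).map ρ)

/-- The infinite schedule `ρ` is applicable to `σ`. -/
def infApplicable (ta : TA L V P R) (σ : Config L V P) (ρ : ℕ → R) : Prop :=
  ∀ n : ℕ, (ta.rule (ρ n)).enabledAt (ta.run σ ρ n)

end TA

/-! ### The Fault-Tolerant Temporal Logic ELTL_FT -/

/-- Configuration formulas `cf ::= (S = 0) | ¬(S = 0) | cf ∧ cf`. -/
inductive CF (L : Type) where
  | emptyAll : Set L → CF L
  | notEmptyAll : Set L → CF L
  | and : CF L → CF L → CF L

/-- Guard formulas `gf ::= guard | gf ∧ gf | gf ∨ gf`. -/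
inductive GF (V P : Type) where
  | guard : TGuard V P → GF V P
  | and : GF V P → GF V P → GF V P
  | or : GF V P → GF V P → GF V P

/-- Propositional formulas `pf ::= cf | (gf ⇒ cf)`. -/
inductive PF (L V P : Type) where
  | cf : CF L → PF L V P
  | imp : GF V P → CF L → PF L V P

/-- ELTL_FT formulas `ψ ::= pf | G ψ | F ψ | ψ ∧ ψ`. -/
inductive ELTL (L V P : Type) where
  | pf : PF L V P → ELTL L V P
  | globally : ELTL L V P → ELTL L V P
  | eventually : ELTL L V P → ELTL L V P
  | and : ELTL L V P → ELTL L V P → ELTL L V P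

def CF.sat {L V P : Type} : CF L → Config L V P → Prop
  | .emptyAll S, σ => ∀ ℓ ∈ S, σ.κ ℓ = 0
  | .notEmptyAll S, σ => ¬ ∀ ℓ ∈ S, σ.κ ℓ = 0
  | .and a b, σ => a.sat σ ∧ b.sat σ

def GF.sat {L V P : Type} [Fintype P] : GF V P → Config L V P → Prop
  | .guard φ, σ => φ.holds σ.g σ.p
  | .and a b, σ => a.sat σ ∧ b.sat σ
  | .or a b, σ => a.sat σ ∨ b.sat σ

def PF.sat {L V P : Type} [Fintype P] : PF L V P → Config L V P → Prop
  | .cf c, σ => c.sat σ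
  | .imp g c, σ => GF.sat g σ → c.sat σ

/-- Satisfaction of an ELTL_FT formula by an infinite path `π` of configurations, with
standard LTL semantics for `G` and `F`. -/
def ELTL.sat {L V P : Type} [Fintype P] : ELTL L V P → (ℕ → Config L V P) → Prop
  | .pf f, π => f.sat (π 0)
  | .globally ψ, π => ∀ n : ℕ, ψ.sat fun t => π (n + t)
  | .eventually ψ, π => ∃ n : ℕ, ψ.sat fun t => π (n + t)
  | .and a b, π => a.sat π ∧ b.sat π

/-! ### The sketch threshold automaton associated with a Σ₂ quantified Boolean formula
`∃x₁…x_m ∀y₁…y_k φ(x,y)` with `φ` in 3-DNF.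

The matrix `φ` is given by `d : Fin D → Fin 3 → (Fin m ⊕ Fin k) × Bool`, where
`d j t = (s, pol)` means that the `t`-th literal of the `j`-th disjunct is the variable `s`
(`Sum.inl i` for `x_i`, `Sum.inr j'` for `y_{j'}`) with polarity `pol`. -/

/-- A literal holds under assignments `a` (for the `x`s) and `b` (for the `y`s). -/
def qlitVal {m k : ℕ} (a : Fin m → Bool) (b : Fin k → Bool)
    (l : (Fin m ⊕ Fin k) × Bool) : Prop :=
  (match l.1 with | Sum.inl i => a i | Sum.inr j => b j) = l.2

/-- Truth of the quantified Boolean formula `∃x ∀y φ(x,y)`. -/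
def qbfTrue {m k D : ℕ} (d : Fin D → Fin 3 → (Fin m ⊕ Fin k) × Bool) : Prop :=
  ∃ a : Fin m → Bool, ∀ b : Fin k → Bool, ∃ j : Fin D, ∀ t : Fin 3, qlitVal a b (d j t)

/-- Locations: `ℓ_{x_0}, …, ℓ_{x_m}`, `ℓ_{y_0}, …, ℓ_{y_k}`, `ℓ_{z_j}`/`ℓ_{z̄_j}`, `ℓ_F`. -/
abbrev QLoc (m k : ℕ) := Fin (m + 1) ⊕ Fin (k + 1) ⊕ (Fin k × Bool) ⊕ Unit

def xLoc {m k : ℕ} (i : Fin (m + 1)) : QLoc m k := Sum.inl i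
def yLoc {m k : ℕ} (j : Fin (k + 1)) : QLoc m k := Sum.inr (Sum.inl j)
def zLoc {m k : ℕ} (j : Fin k) (b : Bool) : QLoc m k := Sum.inr (Sum.inr (Sum.inl (j, b)))
def qFLoc {m k : ℕ} : QLoc m k := Sum.inr (Sum.inr (Sum.inr ()))

/-- Shared variables: `a`, `b_i`/`b̄_i` and `c_j`/`c̄_j`. -/
abbrev QVar (m k : ℕ) := Unit ⊕ (Fin m × Bool) ⊕ (Fin k × Bool)

def varA {m k : ℕ} : QVar m k := Sum.inl ()
def varB {m k : ℕ} (i : Fin m) (b : Bool) : QVar m k := Sum.inr (Sum.inl (i, b))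
def varCq {m k : ℕ} (j : Fin k) (b : Bool) : QVar m k := Sum.inr (Sum.inr (j, b))

/-- The shared variable `var(p)` associated with a literal: `var(x_i) = b_i`,
`var(¬x_i) = b̄_i`, `var(y_j) = c_j`, `var(¬y_j) = c̄_j`. -/
def litVar {m k : ℕ} (l : (Fin m ⊕ Fin k) × Bool) : QVar m k :=
  match l.1 with
  | Sum.inl i => varB i l.2
  | Sum.inr j => varCq j l.2

/-- Rules of the automaton. -/
abbrev QRule (m k D : ℕ) :=
  (Fin m × Bool) ⊕ Unit ⊕ (Fin k × Bool) ⊕ (Fin k × Bool) ⊕ Fin D ⊕ Bool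

def constGuard {V P : Type} (isRise : Bool) (x : V) (a : ℚ) : TGuard V P :=
  ⟨x, isRise, a, fun _ => 0⟩

def unitUpd {V : Type} [DecidableEq V] (x : V) : V → ℕ := fun v => if v = x then 1 else 0

theorem unitUpd_le_one {V : Type} [DecidableEq V] (x v : V) : unitUpd x v ≤ 1 := by
  unfold unitUpd; split <;> omega

/-- The rules of `TA[μ]`, where `μ` is an assignment to the indeterminates `v₁, …, v_m`. -/
def qbfRule {m k D : ℕ} (d : Fin D → Fin 3 → (Fin m ⊕ Fin k) × Bool)
    (μ : Fin m → ℚ) : QRule m k D → TRule (QLoc m k) (QVar m k) Unit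
  | Sum.inl (i, true) =>
      -- `(ℓ_{x_{i-1}}, ℓ_{x_i}, a < v_i·n, b_i++)`
      ⟨xLoc i.castSucc, xLoc i.succ, [⟨varA, false, 0, fun _ => μ i⟩],
        unitUpd (varB i true), fun x => unitUpd_le_one _ x⟩
  | Sum.inl (i, false) =>
      -- `(ℓ_{x_{i-1}}, ℓ_{x_i}, a ≥ v_i·n, b̄_i++)`
      ⟨xLoc i.castSucc, xLoc i.succ, [⟨varA, true, 0, fun _ => μ i⟩],
        unitUpd (varB i false), fun x => unitUpd_le_one _ x⟩
  | Sum.inr (Sum.inl _) =>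
      -- `(ℓ_{x_m}, ℓ_{y_0}, true, no update)`
      ⟨xLoc (Fin.last m), yLoc 0, [], fun _ => 0, fun _ => Nat.zero_le 1⟩
  | Sum.inr (Sum.inr (Sum.inl (j, b))) =>
      -- `(ℓ_{y_{j-1}}, ℓ_{z_j} or ℓ_{z̄_j}, true, c_j++ or c̄_j++)`
      ⟨yLoc j.castSucc, zLoc j b, [], unitUpd (varCq j b), fun x => unitUpd_le_one _ x⟩
  | Sum.inr (Sum.inr (Sum.inr (Sum.inl (j, b)))) =>
      -- `(ℓ_{z_j}, ℓ_{y_j}, c_j ≥ n, no update)` and similarly for `z̄_j`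
      ⟨zLoc j b, yLoc j.succ, [⟨varCq j b, true, 0, fun _ => 1⟩],
        fun _ => 0, fun _ => Nat.zero_le 1⟩
  | Sum.inr (Sum.inr (Sum.inr (Sum.inr (Sum.inl jd)))) =>
      -- `(ℓ_{y_k}, ℓ_F, var(p) ≥ 1 ∧ var(q) ≥ 1 ∧ var(r) ≥ 1, no update)`
      ⟨yLoc (Fin.last k), qFLoc,
        [constGuard true (litVar (d jd 0)) 1, constGuard true (litVar (d jd 1)) 1,
          constGuard true (litVar (d jd 2)) 1],
        fun _ => 0, fun _ => Nat.zero_le 1⟩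
  | Sum.inr (Sum.inr (Sum.inr (Sum.inr (Sum.inr true)))) =>
      -- self-loop at `ℓ_{y_k}`
      ⟨yLoc (Fin.last k), yLoc (Fin.last k), [], fun _ => 0, fun _ => Nat.zero_le 1⟩
  | Sum.inr (Sum.inr (Sum.inr (Sum.inr (Sum.inr false)))) =>
      -- self-loop at `ℓ_F`
      ⟨qFLoc, qFLoc, [], fun _ => 0, fun _ => Nat.zero_le 1⟩

/-- The threshold automaton `TA[μ]`: one parameter `n`, resilience condition `n ≥ 1`,
`N(n) = n`, initial location `ℓ_{x_0}`. -/
def qbfTA {m k D : ℕ} (d : Fin D → Fin 3 → (Fin m ⊕ Fin k) × Bool)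
    (μ : Fin m → ℚ) : TA (QLoc m k) (QVar m k) Unit (QRule m k D) where
  initial := {xLoc 0}
  initial_nonempty := ⟨xLoc 0, rfl⟩
  rc := {p | 1 ≤ p ()}
  N := fun p => p ()
  rule := qbfRule d μ

/-- The guard formula of the `j`-th disjunct: `var(p) ≥ 1 ∧ var(q) ≥ 1 ∧ var(r) ≥ 1`. -/
def disjGF {m k D : ℕ} (d : Fin D → Fin 3 → (Fin m ⊕ Fin k) × Bool) (j : Fin D) :
    GF (QVar m k) Unit :=
  .and (.guard (constGuard true (litVar (d j 0)) 1))
    (.and (.guard (constGuard true (litVar (d j 1)) 1))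
      (.guard (constGuard true (litVar (d j 2)) 1)))

def bigOrGF {V P : Type} : GF V P → List (GF V P) → GF V P
  | g, [] => g
  | g, h :: t => .or g (bigOrGF h t)

/-- The formula `φ' = ⋁_{p∧q∧r ∈ φ} (var(p) ≥ 1 ∧ var(q) ≥ 1 ∧ var(r) ≥ 1)`. -/
def qbfPhi' {m k D : ℕ} (hD : 0 < D) (d : Fin D → Fin 3 → (Fin m ⊕ Fin k) × Bool) :
    GF (QVar m k) Unit :=
  bigOrGF (disjGF d ⟨0, hD⟩) (((List.finRange D).drop 1).map (disjGF d))

/-- The specification `ψ = F G (φ' ⇒ ({ℓ_{y_k}} = 0)) ∧ G ({ℓ_F} = 0)`. -/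
def qbfSpec {m k D : ℕ} (hD : 0 < D) (d : Fin D → Fin 3 → (Fin m ⊕ Fin k) × Bool) :
    ELTL (QLoc m k) (QVar m k) Unit :=
  .and
    (.eventually (.globally (.pf (.imp (qbfPhi' hD d)
      (.emptyAll {yLoc (Fin.last k)})))))
    (.globally (.pf (.cf (.emptyAll {qFLoc}))))

/-- Every infinite path of `TA[μ]` starting at an initial configuration satisfies `¬ψ`. -/
def qbfSpecRefuted {m k D : ℕ} (hD : 0 < D)
    (d : Fin D → Fin 3 → (Fin m ⊕ Fin k) × Bool) (μ : Fin m → ℚ) : Prop :=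
  ∀ σ₀ : Config (QLoc m k) (QVar m k) Unit, (qbfTA d μ).isInitial σ₀ →
    ∀ ρ : ℕ → QRule m k D, (qbfTA d μ).infApplicable σ₀ ρ →
      ¬ (qbfSpec hD d).sat ((qbfTA d μ).run σ₀ ρ)

/-! ### Auxiliary general lemmas -/

section General
set_option linter.unusedSectionVars false

variable {L V P R : Type} [Fintype P] [DecidableEq L]

theorem TA.apply_append (ta : TA L V P R) (σ : Config L V P) (τ₁ τ₂ : List R) :
    ta.apply σ (τ₁ ++ τ₂) = ta.apply (ta.apply σ τ₁) τ₂ := by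
  induction τ₁ generalizing σ with
  | nil => rfl
  | cons r τ ih =>
    show ta.apply ((ta.rule r).fire σ) (τ ++ τ₂) = _
    rw [ih]
    rfl

theorem TA.applicable_append (ta : TA L V P R) (σ : Config L V P) (τ₁ τ₂ : List R) :
    ta.applicable σ (τ₁ ++ τ₂) ↔
      ta.applicable σ τ₁ ∧ ta.applicable (ta.apply σ τ₁) τ₂ := by
  induction τ₁ generalizing σ with
  | nil => simp [TA.applicable, TA.apply]
  | cons r τ ih =>
    show ((ta.rule r).enabledAt σ ∧ ta.applicable ((ta.rule r).fire σ) (τ ++ τ₂)) ↔ _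
    rw [ih]
    show _ ↔ (((ta.rule r).enabledAt σ ∧ ta.applicable ((ta.rule r).fire σ) τ) ∧
      ta.applicable (ta.apply ((ta.rule r).fire σ) τ) τ₂)
    exact and_assoc.symm

theorem TA.run_zero (ta : TA L V P R) (σ : Config L V P) (ρ : ℕ → R) :
    ta.run σ ρ 0 = σ := rfl

theorem TA.run_succ (ta : TA L V P R) (σ : Config L V P) (ρ : ℕ → R) (n : ℕ) :
    ta.run σ ρ (n + 1) = (ta.rule (ρ n)).fire (ta.run σ ρ n) := by
  unfold TA.run
  rw [List.range_succ, List.map_append, TA.apply_append]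
  rfl

theorem fire_p (r : TRule L V P) (σ : Config L V P) : (r.fire σ).p = σ.p := rfl

theorem fire_g (r : TRule L V P) (σ : Config L V P) (v : V) :
    (r.fire σ).g v = σ.g v + r.upd v := rfl

theorem TA.run_p (ta : TA L V P R) (σ : Config L V P) (ρ : ℕ → R) (n : ℕ) :
    (ta.run σ ρ n).p = σ.p := by
  induction n with
  | zero => rfl
  | succ n ih => rw [TA.run_succ]; exact ih

theorem TA.run_g_mono (ta : TA L V P R) (σ : Config L V P) (ρ : ℕ → R) (v : V)
    {n n' : ℕ} (h : n ≤ n') : (ta.run σ ρ n).g v ≤ (ta.run σ ρ n').g v := by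
  induction n' with
  | zero => simp_all
  | succ n' ih =>
    rcases Nat.lt_or_ge n (n' + 1) with h' | h'
    · have := ih (by omega)
      rw [TA.run_succ, fire_g]
      omega
    · have : n = n' + 1 := by omega
      subst this; exact le_refl _

/-- The key weighted-sum identity for firing a rule. -/
theorem fire_sum [Fintype L] (r : TRule L V P) (σ : Config L V P)
    (h : 0 < σ.κ r.src) (w : L → ℕ) :
    (∑ ℓ, (r.fire σ).κ ℓ * w ℓ) + w r.src = (∑ ℓ, σ.κ ℓ * w ℓ) + w r.dst := by
  have key : ∀ ℓ, (r.fire σ).κ ℓ * w ℓ + (if ℓ = r.src then w ℓ else 0)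
      = σ.κ ℓ * w ℓ + (if ℓ = r.dst then w ℓ else 0) := by
    intro ℓ
    have hfire : (r.fire σ).κ ℓ
        = σ.κ ℓ + (if ℓ = r.dst then 1 else 0) - (if ℓ = r.src then 1 else 0) := rfl
    by_cases h1 : ℓ = r.src <;> by_cases h2 : ℓ = r.dst
    · rw [if_pos h1, if_pos h2]
      have hf : (r.fire σ).κ ℓ = σ.κ ℓ := by rw [hfire, if_pos h1, if_pos h2]; omega
      rw [hf]
    · rw [if_pos h1, if_neg h2]
      have h3 : 1 ≤ σ.κ ℓ := by rw [h1]; exact h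
      obtain ⟨K, hK⟩ := Nat.exists_eq_add_of_le h3
      have hf : (r.fire σ).κ ℓ = K := by rw [hfire, if_pos h1, if_neg h2, hK]; omega
      rw [hf, hK]; ring
    · rw [if_neg h1, if_pos h2]
      have hf : (r.fire σ).κ ℓ = σ.κ ℓ + 1 := by rw [hfire, if_pos h2, if_neg h1]; omega
      rw [hf]; ring
    · rw [if_neg h1, if_neg h2]
      have hf : (r.fire σ).κ ℓ = σ.κ ℓ := by rw [hfire, if_neg h1, if_neg h2]; omega
      rw [hf]
  calc (∑ ℓ, (r.fire σ).κ ℓ * w ℓ) + w r.src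
      = ∑ ℓ, ((r.fire σ).κ ℓ * w ℓ + if ℓ = r.src then w ℓ else 0) := by
        rw [Finset.sum_add_distrib, Finset.sum_ite_eq' Finset.univ r.src w,
          if_pos (Finset.mem_univ _)]
    _ = ∑ ℓ, (σ.κ ℓ * w ℓ + if ℓ = r.dst then w ℓ else 0) := by
        exact Finset.sum_congr rfl fun ℓ _ => key ℓ
    _ = (∑ ℓ, σ.κ ℓ * w ℓ) + w r.dst := by
        rw [Finset.sum_add_distrib, Finset.sum_ite_eq' Finset.univ r.dst w,
          if_pos (Finset.mem_univ _)]

/-- Firing a guard-free self-loop with trivial update does not change the configuration. -/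
theorem fire_self (r : TRule L V P) (σ : Config L V P) (h1 : r.src = r.dst)
    (h2 : ∀ v, r.upd v = 0) : r.fire σ = σ := by
  cases σ with
  | mk κ g p =>
    simp only [TRule.fire, Config.mk.injEq]
    refine ⟨funext fun ℓ => ?_, funext fun v => ?_, trivial⟩
    · by_cases hℓ : ℓ = r.dst
      · rw [if_pos hℓ, if_pos (h1 ▸ hℓ)]; omega
      · rw [if_neg hℓ, if_neg (h1 ▸ hℓ)]; omega
    · rw [h2, add_zero]

end General

/-! ### Helpers for the QBF automaton -/

section QBFHelpers

theorem sum_unit (f : Unit → ℚ) : ∑ i : Unit, f i = f () := by simp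

variable {m k D : ℕ}

/-- Named rules. -/
def rX (i : Fin m) (c : Bool) : QRule m k D := Sum.inl (i, c)
def rT : QRule m k D := Sum.inr (Sum.inl ())
def rS (j : Fin k) (c : Bool) : QRule m k D := Sum.inr (Sum.inr (Sum.inl (j, c)))
def rP (j : Fin k) (c : Bool) : QRule m k D := Sum.inr (Sum.inr (Sum.inr (Sum.inl (j, c))))
def rD (jd : Fin D) : QRule m k D := Sum.inr (Sum.inr (Sum.inr (Sum.inr (Sum.inl jd))))
def rLY : QRule m k D := Sum.inr (Sum.inr (Sum.inr (Sum.inr (Sum.inr true))))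
def rLF : QRule m k D := Sum.inr (Sum.inr (Sum.inr (Sum.inr (Sum.inr false))))

theorem qrule_cases (r : QRule m k D) :
    (∃ i c, r = rX i c) ∨ r = rT ∨ (∃ j c, r = rS j c) ∨ (∃ j c, r = rP j c) ∨
      (∃ jd, r = rD jd) ∨ r = rLY ∨ r = rLF := by
  rcases r with ⟨i, c⟩ | u | ⟨j, c⟩ | ⟨j, c⟩ | jd | b
  · exact Or.inl ⟨i, c, rfl⟩
  · exact Or.inr (Or.inl rfl)
  · exact Or.inr (Or.inr (Or.inl ⟨j, c, rfl⟩))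
  · exact Or.inr (Or.inr (Or.inr (Or.inl ⟨j, c, rfl⟩)))
  · exact Or.inr (Or.inr (Or.inr (Or.inr (Or.inl ⟨jd, rfl⟩))))
  · cases b
    · exact Or.inr (Or.inr (Or.inr (Or.inr (Or.inr (Or.inr rfl)))))
    · exact Or.inr (Or.inr (Or.inr (Or.inr (Or.inr (Or.inl rfl)))))

/-- The rank of a location along the chain `x₀ → … → x_m → y₀ → z₁ → y₁ → … → y_k → F`. -/
def qrank : QLoc m k → ℕ
  | Sum.inl i => i.val
  | Sum.inr (Sum.inl j) => m + 1 + 2 * j.val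
  | Sum.inr (Sum.inr (Sum.inl (j, _))) => m + 2 + 2 * j.val
  | Sum.inr (Sum.inr (Sum.inr _)) => m + 2 * k + 2

theorem qrank_le (ℓ : QLoc m k) : qrank ℓ ≤ m + 2 * k + 2 := by
  rcases ℓ with i | j | ⟨j, c⟩ | u <;> simp only [qrank] <;> [skip; skip; skip; omega]
  · have := i.isLt; omega
  · have := j.isLt; omega
  · have := j.isLt; omega

variable (d : Fin D → Fin 3 → (Fin m ⊕ Fin k) × Bool) (μ : Fin m → ℚ)

theorem rX_src (i : Fin m) (c : Bool) :
    (qbfRule d μ (rX i c)).src = xLoc i.castSucc := by cases c <;> rfl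
theorem rX_dst (i : Fin m) (c : Bool) :
    (qbfRule d μ (rX i c)).dst = xLoc i.succ := by cases c <;> rfl
theorem rX_upd (i : Fin m) (c : Bool) :
    (qbfRule d μ (rX i c)).upd = unitUpd (varB i c) := by cases c <;> rfl

theorem upd_varA (r : QRule m k D) : (qbfRule d μ r).upd varA = 0 := by
  rcases r with ⟨i, c⟩ | u | ⟨j, c⟩ | ⟨j, c⟩ | jd | b
  · cases c <;> simp [qbfRule, unitUpd, varA, varB]
  · rfl
  · simp [qbfRule, unitUpd, varA, varCq]
  · rfl
  · rfl
  · cases b <;> rfl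

/-- `varA` is never incremented. -/
theorem run_g_varA (σ₀ : Config (QLoc m k) (QVar m k) Unit)
    (h : σ₀.g varA = 0) (ρ : ℕ → QRule m k D) (n : ℕ) :
    ((qbfTA d μ).run σ₀ ρ n).g varA = 0 := by
  induction n with
  | zero => exact h
  | succ n ih =>
    rw [TA.run_succ, fire_g, ih, zero_add]
    exact upd_varA d μ (ρ n)

theorem holds_unit (φ : TGuard (QVar m k) Unit) (g : QVar m k → ℕ) (p : Unit → ℕ) :
    φ.holds g p ↔ if φ.isRise then φ.a0 + φ.coef () * (p () : ℚ) ≤ (g φ.var : ℚ)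
      else (g φ.var : ℚ) < φ.a0 + φ.coef () * (p () : ℚ) := by
  unfold TGuard.holds
  rw [sum_unit (fun i => φ.coef i * (p i : ℚ))]

theorem constGuard_one_holds (v : QVar m k) (g : QVar m k → ℕ) (p : Unit → ℕ) :
    (constGuard true v (1 : ℚ)).holds g p ↔ 1 ≤ g v := by
  rw [holds_unit]
  simp only [constGuard, if_true, zero_mul, add_zero]
  constructor
  · intro h; exact_mod_cast h
  · intro h; exact_mod_cast h

theorem cGuard_holds (j : Fin k) (c : Bool) (g : QVar m k → ℕ) (p : Unit → ℕ) :
    (TGuard.mk (varCq j c) true 0 (fun _ => (1 : ℚ))).holds g p ↔ p () ≤ g (varCq j c) := by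
  rw [holds_unit]
  simp only [if_true, one_mul, zero_add]
  constructor
  · intro h; exact_mod_cast h
  · intro h; exact_mod_cast h

theorem xGuard_true_holds (i : Fin m) (g : QVar m k → ℕ) (p : Unit → ℕ) :
    (TGuard.mk (varA : QVar m k) false 0 (fun _ => μ i)).holds g p ↔
      (g varA : ℚ) < μ i * (p () : ℚ) := by
  rw [holds_unit]; simp

theorem xGuard_false_holds (i : Fin m) (g : QVar m k → ℕ) (p : Unit → ℕ) :
    (TGuard.mk (varA : QVar m k) true 0 (fun _ => μ i)).holds g p ↔
      μ i * (p () : ℚ) ≤ (g varA : ℚ) := by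
  rw [holds_unit]; simp

/-- Under the {0,1} assignment induced by `a`, rule `rX i c` can only fire with `c = a i`. -/
theorem rX_enabled_forces (a : Fin m → Bool) (i : Fin m) (c : Bool)
    (σ : Config (QLoc m k) (QVar m k) Unit) (hA : σ.g varA = 0) (hp : 1 ≤ σ.p ())
    (hen : (qbfRule d (fun i => if a i then 1 else 0) (rX i c)).enabledAt σ) : c = a i := by
  obtain ⟨-, hg⟩ := hen
  by_contra hc
  have hp' : (1 : ℚ) ≤ (σ.p () : ℚ) := by exact_mod_cast hp
  cases c
  · -- c = false, so a i = true; rise guard `μ i * p ≤ g varA = 0` fails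
    have ha : a i = true := by revert hc; cases a i <;> simp
    have h := hg _ (List.mem_singleton.mpr rfl)
    simp [TGuard.holds, ha, hA] at h
    linarith
  · -- c = true, so a i = false; fall guard `g varA < μ i * p = 0` fails
    have ha : a i = false := by revert hc; cases a i <;> simp
    have h := hg _ (List.mem_singleton.mpr rfl)
    simp [TGuard.holds, ha, hA] at h

end QBFHelpers

/-! ### Infinite schedules from a finite prefix followed by a self-loop -/

section GetD

variable {L V P R : Type} [Fintype P] [DecidableEq L]

theorem TA.applicable_get (ta : TA L V P R) (σ : Config L V P) (l : List R)
    (h : ta.applicable σ l) (n : ℕ) (hn : n < l.length) :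
    (ta.rule (l.get ⟨n, hn⟩)).enabledAt (ta.apply σ (l.take n)) := by
  induction l generalizing σ n with
  | nil => simp at hn
  | cons r τ ih =>
    obtain ⟨he, h⟩ := h
    cases n with
    | zero => exact he
    | succ n => exact ih _ h n (by simpa using hn)

theorem TA.run_getD (ta : TA L V P R) (σ : Config L V P) (l : List R) (c : R)
    (h3 : (ta.rule c).fire (ta.apply σ l) = ta.apply σ l) (n : ℕ) :
    ta.run σ (fun t => l.getD t c) n = ta.apply σ (l.take n) := by
  induction n with
  | zero => rfl
  | succ n ih =>
    rw [TA.run_succ, ih]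
    by_cases h : n < l.length
    · rw [List.getD_eq_getElem l c h]
      conv_rhs => rw [List.take_succ, List.getElem?_eq_getElem h]
      rw [TA.apply_append]
      rfl
    · rw [List.getD_eq_default l c (le_of_not_gt h),
        List.take_of_length_le (le_of_not_gt h),
        List.take_of_length_le (by omega : l.length ≤ n + 1)]
      exact h3

theorem TA.infApplicable_getD (ta : TA L V P R) (σ : Config L V P) (l : List R) (c : R)
    (h1 : ta.applicable σ l) (h2 : (ta.rule c).enabledAt (ta.apply σ l))
    (h3 : (ta.rule c).fire (ta.apply σ l) = ta.apply σ l) :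
    ta.infApplicable σ (fun t => l.getD t c) := by
  intro n
  rw [TA.run_getD ta σ l c h3 n]
  show (ta.rule (l.getD n c)).enabledAt (ta.apply σ (l.take n))
  by_cases h : n < l.length
  · rw [List.getD_eq_getElem l c h]
    exact ta.applicable_get σ l h1 n h
  · rw [List.getD_eq_default l c (le_of_not_gt h),
      List.take_of_length_le (le_of_not_gt h)]
    exact h2

end GetD

/-! ### Disjunction formula lemmas -/

section Phi

theorem bigOrGF_sat {V P : Type} [Fintype P] (g : GF V P) (l : List (GF V P))
    (σ : Config V V P → Prop := fun _ => True) :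
    True := trivial

theorem bigOrGF_sat_iff {L V P : Type} [Fintype P] (g : GF V P) (l : List (GF V P))
    (σ : Config L V P) :
    GF.sat (bigOrGF g l) σ ↔ GF.sat g σ ∨ ∃ h ∈ l, GF.sat h σ := by
  induction l generalizing g with
  | nil => simp [bigOrGF]
  | cons h t ih =>
    simp only [bigOrGF, GF.sat, ih, List.mem_cons]
    constructor
    · rintro (hg | hh | ⟨x, hx, hs⟩)
      · exact Or.inl hg
      · exact Or.inr ⟨h, Or.inl rfl, hh⟩
      · exact Or.inr ⟨x, Or.inr hx, hs⟩
    · rintro (hg | ⟨x, rfl | hx, hs⟩)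
      · exact Or.inl hg
      · exact Or.inr (Or.inl hs)
      · exact Or.inr (Or.inr ⟨x, hx, hs⟩)

variable {m k D : ℕ}

theorem mem_finRange_drop_one (jd : Fin D) (h : 0 < jd.val) :
    jd ∈ (List.finRange D).drop 1 := by
  have hlen : jd.val - 1 < ((List.finRange D).drop 1).length := by
    simp only [List.length_drop, List.length_finRange]
    have := jd.isLt; omega
  have key : ((List.finRange D).drop 1)[jd.val - 1]'hlen = jd := by
    rw [List.getElem_drop]
    simp only [List.getElem_finRange, Fin.cast_mk]
    refine Fin.ext ?_
    show 1 + (jd.val - 1) = jd.val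
    omega
  rw [← key]
  exact List.getElem_mem hlen

theorem qbfPhi'_sat_iff (hD : 0 < D) (d : Fin D → Fin 3 → (Fin m ⊕ Fin k) × Bool)
    (σ : Config (QLoc m k) (QVar m k) Unit) :
    GF.sat (qbfPhi' hD d) σ ↔ ∃ jd : Fin D, GF.sat (disjGF d jd) σ := by
  unfold qbfPhi'
  rw [bigOrGF_sat_iff]
  constructor
  · rintro (hg | ⟨h, hmem, hs⟩)
    · exact ⟨⟨0, hD⟩, hg⟩
    · obtain ⟨jd, -, rfl⟩ := List.mem_map.mp hmem
      exact ⟨jd, hs⟩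
  · rintro ⟨jd, hs⟩
    by_cases h0 : jd.val = 0
    · left
      have : jd = ⟨0, hD⟩ := Fin.ext h0
      rwa [← this]
    · right
      exact ⟨disjGF d jd, List.mem_map.mpr ⟨jd, mem_finRange_drop_one jd (by omega), rfl⟩, hs⟩

theorem disjGF_sat_iff (d : Fin D → Fin 3 → (Fin m ⊕ Fin k) × Bool) (jd : Fin D)
    (σ : Config (QLoc m k) (QVar m k) Unit) :
    GF.sat (disjGF d jd) σ ↔ ∀ t : Fin 3, 1 ≤ σ.g (litVar (d jd t)) := by
  simp only [disjGF, GF.sat, constGuard_one_holds]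
  constructor
  · rintro ⟨h0, h1, h2⟩ t
    fin_cases t <;> assumption
  · intro h
    exact ⟨h 0, h 1, h 2⟩

end Phi

/-! ### The backward direction: from a refuting assignment to truth of the QBF -/

section Backward

variable {m k D : ℕ}

/-- One process at location `ℓ`, shared variables `g`, parameter value `1`. -/
def ind (ℓ : QLoc m k) : QLoc m k → ℕ := fun ℓ' => if ℓ' = ℓ then 1 else 0

def cfg (ℓ : QLoc m k) (g : QVar m k → ℕ) : Config (QLoc m k) (QVar m k) Unit :=
  ⟨ind ℓ, g, fun _ => 1⟩

theorem fire_cfg (r : TRule (QLoc m k) (QVar m k) Unit) (h : r.src ≠ r.dst)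
    (g : QVar m k → ℕ) :
    r.fire (cfg r.src g) = cfg r.dst (fun v => g v + r.upd v) := by
  simp only [cfg, TRule.fire, Config.mk.injEq]
  refine ⟨funext fun ℓ' => ?_, trivial, trivial⟩
  unfold ind
  by_cases h1 : ℓ' = r.src <;> by_cases h2 : ℓ' = r.dst
  · exact absurd (h1.symm.trans h2) h
  · simp [h1, h2]
  · simp [h1, h2]
  · simp [h1, h2]

variable (d : Fin D → Fin 3 → (Fin m ⊕ Fin k) × Bool) (μ : Fin m → ℚ)
variable (a : Fin m → Bool) (b : Fin k → Bool)

/-- The x-phase of the canonical single-process path. -/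
theorem chainX (ha : ∀ i, a i = true ↔ 0 < μ i) :
    ∀ s t (hts : t + s = m) (g : QVar m k → ℕ), g varA = 0 →
      (qbfTA d μ).applicable (cfg (xLoc ⟨t, by omega⟩) g)
        (((List.finRange m).drop t).map fun i => rX (D := D) i (a i)) ∧
      ∃ g', (qbfTA d μ).apply (cfg (xLoc ⟨t, by omega⟩) g)
          (((List.finRange m).drop t).map fun i => rX (D := D) i (a i))
        = cfg (xLoc (Fin.last m)) g' ∧ g' varA = 0 := by
  intro s
  induction s with
  | zero =>
    intro t hts g hg
    have ht : t = m := by omega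
    subst ht
    rw [List.drop_of_length_le (by simp), List.map_nil]
    exact ⟨trivial, g, rfl, hg⟩
  | succ s ih =>
    intro t hts g hg
    have htm : t < m := by omega
    set i : Fin m := ⟨t, htm⟩ with hi
    have hdrop : (List.finRange m).drop t = i :: (List.finRange m).drop (t + 1) := by
      rw [List.drop_eq_getElem_cons (by simpa using htm)]
      congr 1
      simp only [List.getElem_finRange, Fin.cast_mk, hi]
    rw [hdrop, List.map_cons]
    -- source and destination of the rule
    have hsrc : (qbfRule d μ (rX i (a i))).src = xLoc ⟨t, by omega⟩ := by
      rw [rX_src]; rfl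
    have hdst : (qbfRule d μ (rX i (a i))).dst = xLoc ⟨t + 1, by omega⟩ := by
      rw [rX_dst]; rfl
    have hne : (qbfRule d μ (rX i (a i))).src ≠ (qbfRule d μ (rX i (a i))).dst := by
      rw [hsrc, hdst]
      intro hc
      have : t = t + 1 := congrArg Fin.val (Sum.inl.inj hc)
      omega
    have hfire : (qbfRule d μ (rX i (a i))).fire (cfg (xLoc ⟨t, by omega⟩) g)
        = cfg (xLoc ⟨t + 1, by omega⟩)
            (fun v => g v + (qbfRule d μ (rX i (a i))).upd v) := by
      conv_lhs => rw [← hsrc]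
      rw [fire_cfg _ hne, hdst]
    have hg2 : (fun v => g v + (qbfRule d μ (rX i (a i))).upd v) varA = 0 := by
      simp only [hg, rX_upd, zero_add]
      cases hc : a i <;> simp [unitUpd, varA, varB]
    have hen : (qbfRule d μ (rX i (a i))).enabledAt (cfg (xLoc ⟨t, by omega⟩) g) := by
      constructor
      · rw [hsrc]; simp [cfg, ind]
      · intro φ hφ
        cases hval : a i
        · rw [hval] at hφ
          rw [List.mem_singleton.mp hφ, xGuard_false_holds]
          have : ¬ 0 < μ i := fun hc => by simp [(ha i).mpr hc] at hval
          show μ i * ((1 : ℕ) : ℚ) ≤ ((g varA : ℕ) : ℚ)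
          rw [hg]
          push_cast
          nlinarith [le_of_not_gt this]
        · rw [hval] at hφ
          rw [List.mem_singleton.mp hφ, xGuard_true_holds]
          have hpos : 0 < μ i := (ha i).mp hval
          show ((g varA : ℕ) : ℚ) < μ i * ((1 : ℕ) : ℚ)
          rw [hg]
          push_cast
          nlinarith
    obtain ⟨hap, g', heq, hg'⟩ := ih (t + 1) (by omega)
      (fun v => g v + (qbfRule d μ (rX i (a i))).upd v) hg2
    refine ⟨⟨hen, ?_⟩, g', ?_, hg'⟩
    · show (qbfTA d μ).applicable
        ((qbfRule d μ (rX i (a i))).fire (cfg (xLoc ⟨t, by omega⟩) g)) _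
      rw [hfire]; exact hap
    · show (qbfTA d μ).apply ((qbfRule d μ (rX i (a i))).fire (cfg (xLoc ⟨t, by omega⟩) g)) _ = _
      rw [hfire]; exact heq

/-- The y-phase of the canonical single-process path. -/
theorem chainY :
    ∀ s t (hts : t + s = k) (g : QVar m k → ℕ),
      (qbfTA d μ).applicable (cfg (yLoc ⟨t, by omega⟩) g)
        (((List.finRange k).drop t).flatMap fun j => [rS (m := m) (D := D) j (b j), rP j (b j)]) ∧
      ∃ g', (qbfTA d μ).apply (cfg (yLoc ⟨t, by omega⟩) g)
          (((List.finRange k).drop t).flatMap fun j => [rS (m := m) (D := D) j (b j), rP j (b j)])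
        = cfg (yLoc (Fin.last k)) g' := by
  intro s
  induction s with
  | zero =>
    intro t hts g
    have ht : t = k := by omega
    subst ht
    rw [List.drop_of_length_le (by simp)]
    exact ⟨trivial, g, rfl⟩
  | succ s ih =>
    intro t hts g
    have htk : t < k := by omega
    set j : Fin k := ⟨t, htk⟩ with hj
    have hdrop : (List.finRange k).drop t = j :: (List.finRange k).drop (t + 1) := by
      rw [List.drop_eq_getElem_cons (by simpa using htk)]
      congr 1
      simp only [List.getElem_finRange, Fin.cast_mk, hj]
    rw [hdrop]
    rw [show ((j :: (List.finRange k).drop (t + 1)).flatMap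
        fun j => [rS (m := m) (D := D) j (b j), rP j (b j)])
      = rS j (b j) :: rP j (b j) ::
        (((List.finRange k).drop (t + 1)).flatMap fun j => [rS j (b j), rP j (b j)]) from rfl]
    -- the split rule
    have hsrcS : (qbfRule d μ (rS j (b j))).src = yLoc ⟨t, by omega⟩ := rfl
    have hdstS : (qbfRule d μ (rS j (b j))).dst = zLoc j (b j) := rfl
    have hneS : (qbfRule d μ (rS j (b j))).src ≠ (qbfRule d μ (rS j (b j))).dst := by
      rw [hsrcS, hdstS]; simp [yLoc, zLoc]
    have hfireS : (qbfRule d μ (rS j (b j))).fire (cfg (yLoc ⟨t, by omega⟩) g)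
        = cfg (zLoc j (b j)) (fun v => g v + unitUpd (varCq j (b j)) v) := by
      conv_lhs => rw [← hsrcS]
      rw [fire_cfg _ hneS, hdstS]
      rfl
    have henS : (qbfRule d μ (rS j (b j))).enabledAt (cfg (yLoc ⟨t, by omega⟩) g) := by
      constructor
      · rw [hsrcS]; simp [cfg, ind]
      · intro φ hφ
        rw [show (qbfRule d μ (rS j (b j))).guard = [] from rfl] at hφ
        exact absurd hφ List.not_mem_nil
    -- the pass rule
    set g1 : QVar m k → ℕ := fun v => g v + unitUpd (varCq j (b j)) v with hg1
    have hsrcP : (qbfRule d μ (rP j (b j))).src = zLoc j (b j) := rfl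
    have hdstP : (qbfRule d μ (rP j (b j))).dst = yLoc ⟨t + 1, by omega⟩ := by
      show yLoc j.succ = _
      rfl
    have hneP : (qbfRule d μ (rP j (b j))).src ≠ (qbfRule d μ (rP j (b j))).dst := by
      rw [hsrcP, hdstP]; simp [yLoc, zLoc]
    have hfireP : (qbfRule d μ (rP j (b j))).fire (cfg (zLoc j (b j)) g1)
        = cfg (yLoc ⟨t + 1, by omega⟩) (fun v => g1 v + (qbfRule d μ (rP j (b j))).upd v) := by
      conv_lhs => rw [← hsrcP]
      rw [fire_cfg _ hneP, hdstP]
    have henP : (qbfRule d μ (rP j (b j))).enabledAt (cfg (zLoc j (b j)) g1) := by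
      constructor
      · rw [hsrcP]; simp [cfg, ind]
      · intro φ hφ
        rw [show (qbfRule d μ (rP j (b j))).guard
          = [TGuard.mk (varCq j (b j)) true 0 (fun _ => (1 : ℚ))] from rfl] at hφ
        rw [List.mem_singleton.mp hφ, cGuard_holds]
        show (1 : ℕ) ≤ g1 (varCq j (b j))
        simp [hg1, unitUpd]
    obtain ⟨hap, g', heq⟩ := ih (t + 1) (by omega) (fun v => g1 v + (qbfRule d μ (rP j (b j))).upd v)
    refine ⟨⟨henS, ?_⟩, g', ?_⟩
    · refine ⟨?_, ?_⟩
      · show ((qbfTA d μ).rule (rP j (b j))).enabledAt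
          ((qbfRule d μ (rS j (b j))).fire (cfg (yLoc ⟨t, by omega⟩) g))
        rw [hfireS]
        exact henP
      · show (qbfTA d μ).applicable
          ((qbfRule d μ (rP j (b j))).fire
            ((qbfRule d μ (rS j (b j))).fire (cfg (yLoc ⟨t, by omega⟩) g))) _
        rw [hfireS, hfireP]
        exact hap
    · show (qbfTA d μ).apply
        ((qbfRule d μ (rP j (b j))).fire ((qbfRule d μ (rS j (b j))).fire _)) _ = _
      rw [hfireS]
      show (qbfTA d μ).apply ((qbfRule d μ (rP j (b j))).fire (cfg (zLoc j (b j)) g1)) _ = _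
      rw [hfireP]
      exact heq

end Backward

section BackwardMain

variable {m k D : ℕ} (d : Fin D → Fin 3 → (Fin m ⊕ Fin k) × Bool) (μ : Fin m → ℚ)
variable (a : Fin m → Bool) (b : Fin k → Bool)

/-- The forward part of the canonical single-process schedule. -/
def fwdList : List (QRule m k D) :=
  ((List.finRange m).map fun i => rX i (a i)) ++
    rT :: ((List.finRange k).flatMap fun j => [rS j (b j), rP j (b j)])

/-- The invariant maintained along the canonical path. -/
def Jinv (σ : Config (QLoc m k) (QVar m k) Unit) : Prop :=
  σ.κ qFLoc = 0 ∧ (∀ i c, c ≠ a i → σ.g (varB i c) = 0) ∧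
    (∀ j c, c ≠ b j → σ.g (varCq j c) = 0)

theorem Jinv_fire (r : QRule m k D)
    (hr : (∃ i, r = rX i (a i)) ∨ r = rT ∨ (∃ j, r = rS j (b j) ∨ r = rP j (b j)) ∨ r = rLY)
    (σ : Config (QLoc m k) (QVar m k) Unit) (hJ : Jinv a b σ) :
    Jinv a b ((qbfRule d μ r).fire σ) := by
  obtain ⟨h1, h2, h3⟩ := hJ
  have hdst : qFLoc ≠ (qbfRule d μ r).dst := by
    rcases hr with ⟨i, rfl⟩ | rfl | ⟨j, rfl | rfl⟩ | rfl
    · rw [rX_dst]; simp [xLoc, qFLoc]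
    · show qFLoc ≠ yLoc 0; simp [yLoc, qFLoc]
    · show qFLoc ≠ zLoc j (b j); simp [zLoc, qFLoc]
    · show qFLoc ≠ yLoc j.succ; simp [yLoc, qFLoc]
    · show qFLoc ≠ yLoc (Fin.last k); simp [yLoc, qFLoc]
  refine ⟨?_, ?_, ?_⟩
  · show σ.κ qFLoc + (if qFLoc = (qbfRule d μ r).dst then 1 else 0)
      - (if qFLoc = (qbfRule d μ r).src then 1 else 0) = 0
    rw [h1, if_neg hdst]
    simp
  · intro i c hc
    rw [fire_g, h2 i c hc, zero_add]
    rcases hr with ⟨i', rfl⟩ | rfl | ⟨j', rfl | rfl⟩ | rfl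
    · rw [rX_upd]
      unfold unitUpd
      rw [if_neg]
      intro hcc
      simp only [varB, Sum.inr.injEq, Sum.inl.injEq, Prod.mk.injEq] at hcc
      exact hc (hcc.1 ▸ hcc.2)
    · rfl
    · show unitUpd (varCq j' (b j')) (varB i c) = 0
      unfold unitUpd
      rw [if_neg]
      simp [varB, varCq]
    · rfl
    · rfl
  · intro j c hc
    rw [fire_g, h3 j c hc, zero_add]
    rcases hr with ⟨i', rfl⟩ | rfl | ⟨j', rfl | rfl⟩ | rfl
    · rw [rX_upd]
      unfold unitUpd
      rw [if_neg]
      simp [varB, varCq]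
    · rfl
    · show unitUpd (varCq j' (b j')) (varCq j c) = 0
      unfold unitUpd
      rw [if_neg]
      intro hcc
      simp only [varCq, Sum.inr.injEq, Prod.mk.injEq] at hcc
      exact hc (hcc.1 ▸ hcc.2)
    · rfl
    · rfl

theorem Jinv_run (σ₀ : Config (QLoc m k) (QVar m k) Unit) (hJ : Jinv a b σ₀)
    (ρ : ℕ → QRule m k D)
    (hρ : ∀ n, (∃ i, ρ n = rX i (a i)) ∨ ρ n = rT ∨
      (∃ j, ρ n = rS j (b j) ∨ ρ n = rP j (b j)) ∨ ρ n = rLY)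
    (n : ℕ) : Jinv a b ((qbfTA d μ).run σ₀ ρ n) := by
  induction n with
  | zero => exact hJ
  | succ n ih =>
    rw [TA.run_succ]
    exact Jinv_fire d μ a b (ρ n) (hρ n) _ ih

theorem mem_fwdList (r : QRule m k D) (hr : r ∈ fwdList a b) :
    (∃ i, r = rX i (a i)) ∨ r = rT ∨ (∃ j, r = rS j (b j) ∨ r = rP j (b j)) := by
  simp only [fwdList, List.mem_append, List.mem_cons, List.mem_map, List.mem_flatMap,
    List.mem_finRange] at hr
  rcases hr with ⟨i, -, rfl⟩ | rfl | ⟨j, -, hj⟩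
  · exact Or.inl ⟨i, rfl⟩
  · exact Or.inr (Or.inl rfl)
  · simp only [List.mem_cons, List.mem_singleton, List.not_mem_nil, or_false] at hj
    rcases hj with rfl | rfl
    · exact Or.inr (Or.inr ⟨j, Or.inl rfl⟩)
    · exact Or.inr (Or.inr ⟨j, Or.inr rfl⟩)

theorem lit_true_of_g (g : QVar m k → ℕ)
    (hB : ∀ i c, c ≠ a i → g (varB i c) = 0)
    (hC : ∀ j c, c ≠ b j → g (varCq j c) = 0)
    (l : (Fin m ⊕ Fin k) × Bool) (h : 1 ≤ g (litVar l)) : qlitVal a b l := by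
  obtain ⟨s, pol⟩ := l
  cases s with
  | inl i =>
    show a i = pol
    by_contra hc
    rw [show litVar ((Sum.inl i, pol) : (Fin m ⊕ Fin k) × Bool) = varB i pol from rfl] at h
    rw [hB i pol (fun hh => hc hh.symm)] at h
    omega
  | inr j =>
    show b j = pol
    by_contra hc
    rw [show litVar ((Sum.inr j, pol) : (Fin m ⊕ Fin k) × Bool) = varCq j pol from rfl] at h
    rw [hC j pol (fun hh => hc hh.symm)] at h
    omega

theorem backward_main (hD : 0 < D) (href : qbfSpecRefuted hD d μ) : qbfTrue d := by
  classical
  set a : Fin m → Bool := fun i => decide (0 < μ i) with ha_def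
  refine ⟨a, fun b => ?_⟩
  have ha : ∀ i, a i = true ↔ 0 < μ i := fun i => by simp [ha_def]
  -- the initial configuration with a single process
  set σ₀ : Config (QLoc m k) (QVar m k) Unit :=
    cfg (xLoc ⟨0, Nat.succ_pos m⟩) (fun _ => 0) with hσ₀
  have h00 : (⟨0, Nat.succ_pos m⟩ : Fin (m + 1)) = 0 := Fin.ext (by simp)
  have hinit : (qbfTA d μ).isInitial σ₀ := by
    refine ⟨⟨le_refl 1, ?_⟩, ?_, fun v => rfl⟩
    · show (∑ ℓ : QLoc m k, ind (xLoc ⟨0, Nat.succ_pos m⟩) ℓ) = 1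
      simp [ind, xLoc]
    · intro ℓ hℓ
      show ind _ ℓ = 0
      rw [ind, if_neg]
      intro hc
      apply hℓ
      rw [hc]
      show xLoc ⟨0, Nat.succ_pos m⟩ ∈ ({xLoc 0} : Set (QLoc m k))
      rw [h00]
      rfl
  -- the x-phase
  obtain ⟨hapX, gx, heqX, hgxA⟩ :=
    chainX d μ a ha m 0 (by omega) (fun _ => 0) rfl
  rw [List.drop_zero] at hapX heqX
  -- the transition rule
  have hsrcT : (qbfRule d μ (rT : QRule m k D)).src = xLoc (Fin.last m) := rfl
  have hdstT : (qbfRule d μ (rT : QRule m k D)).dst = yLoc ⟨0, Nat.succ_pos k⟩ := by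
    show yLoc 0 = yLoc ⟨0, Nat.succ_pos k⟩
    exact congrArg yLoc (Fin.ext (by simp))
  have hneT : (qbfRule d μ (rT : QRule m k D)).src ≠ (qbfRule d μ (rT : QRule m k D)).dst := by
    rw [hsrcT, hdstT]; simp [xLoc, yLoc]
  have henT : (qbfRule d μ (rT : QRule m k D)).enabledAt (cfg (xLoc (Fin.last m)) gx) := by
    constructor
    · rw [hsrcT]; simp [cfg, ind]
    · intro φ hφ
      exact absurd hφ List.not_mem_nil
  have hfireT : (qbfRule d μ (rT : QRule m k D)).fire (cfg (xLoc (Fin.last m)) gx)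
      = cfg (yLoc ⟨0, Nat.succ_pos k⟩)
          (fun v => gx v + (qbfRule d μ (rT : QRule m k D)).upd v) := by
    conv_lhs => rw [← hsrcT]
    rw [fire_cfg _ hneT, hdstT]
  -- the y-phase
  obtain ⟨hapY, gf, heqY⟩ :=
    chainY d μ b k 0 (by omega) (fun v => gx v + (qbfRule d μ (rT : QRule m k D)).upd v)
  rw [List.drop_zero] at hapY heqY
  -- assembled applicability and result
  have happ_fwd : (qbfTA d μ).applicable σ₀ (fwdList a b) := by
    rw [fwdList, TA.applicable_append]
    refine ⟨hapX, ?_⟩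
    rw [heqX]
    refine ⟨henT, ?_⟩
    show (qbfTA d μ).applicable
      ((qbfRule d μ (rT : QRule m k D)).fire (cfg (xLoc (Fin.last m)) gx)) _
    rw [hfireT]
    exact hapY
  have happly : (qbfTA d μ).apply σ₀ (fwdList a b) = cfg (yLoc (Fin.last k)) gf := by
    rw [fwdList, TA.apply_append, heqX]
    show (qbfTA d μ).apply
      ((qbfRule d μ (rT : QRule m k D)).fire (cfg (xLoc (Fin.last m)) gx)) _ = _
    rw [hfireT]
    exact heqY
  -- the self-loop at ℓ_{y_k}
  have henL : (qbfRule d μ (rLY : QRule m k D)).enabledAt (cfg (yLoc (Fin.last k)) gf) := by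
    constructor
    · show (0 : ℕ) < ind (yLoc (Fin.last k)) (yLoc (Fin.last k))
      simp [ind]
    · intro φ hφ
      exact absurd hφ List.not_mem_nil
  have hfireL : (qbfRule d μ (rLY : QRule m k D)).fire (cfg (yLoc (Fin.last k)) gf)
      = cfg (yLoc (Fin.last k)) gf := fire_self _ _ rfl (fun v => rfl)
  set ρ : ℕ → QRule m k D := fun t => (fwdList a b).getD t rLY with hρdef
  have happ : (qbfTA d μ).infApplicable σ₀ ρ := by
    refine TA.infApplicable_getD _ σ₀ _ rLY happ_fwd ?_ ?_
    · rw [happly]; exact henL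
    · rw [happly]; exact hfireL
  -- the invariant holds along the run
  have hρmem : ∀ n, (∃ i, ρ n = rX i (a i)) ∨ ρ n = rT ∨
      (∃ j, ρ n = rS j (b j) ∨ ρ n = rP j (b j)) ∨ ρ n = rLY := by
    intro n
    by_cases h : n < (fwdList (m := m) (k := k) (D := D) a b).length
    · have hmem : ρ n ∈ (fwdList a b : List (QRule m k D)) := by
        rw [hρdef]
        show (fwdList a b).getD n rLY ∈ fwdList a b
        rw [List.getD_eq_getElem _ _ h]
        exact List.getElem_mem h
      rcases mem_fwdList a b _ hmem with h' | h' | ⟨j, h'⟩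
      · exact Or.inl h'
      · exact Or.inr (Or.inl h')
      · exact Or.inr (Or.inr (Or.inl ⟨j, h'⟩))
    · right; right; right
      show (fwdList a b).getD n rLY = rLY
      exact List.getD_eq_default _ _ (le_of_not_gt h)
  have hJ0 : Jinv a b σ₀ := by
    refine ⟨?_, fun _ _ _ => rfl, fun _ _ _ => rfl⟩
    show ind (m := m) (k := k) (xLoc ⟨0, Nat.succ_pos m⟩) qFLoc = 0
    rw [ind, if_neg]
    simp [xLoc, qFLoc]
  have hJ := Jinv_run d μ a b σ₀ hJ0 ρ hρmem
  -- use the refutation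
  have hnot := href σ₀ hinit ρ happ
  have hψ2 : ELTL.sat (.globally (.pf (.cf (.emptyAll {qFLoc}))))
      ((qbfTA d μ).run σ₀ ρ) := by
    intro n ℓ hℓ
    rw [Set.mem_singleton_iff] at hℓ
    subst hℓ
    exact (hJ n).1
  have hnψ1 : ¬ ∀ n2 : ℕ, PF.sat (.imp (qbfPhi' hD d) (.emptyAll {yLoc (Fin.last k)}))
      ((qbfTA d μ).run σ₀ ρ (0 + n2)) := by
    intro hc
    exact hnot ⟨⟨0, fun n2 => hc n2⟩, hψ2⟩
  obtain ⟨T, hT⟩ := not_forall.mp hnψ1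
  have hT' : GF.sat (qbfPhi' hD d) ((qbfTA d μ).run σ₀ ρ (0 + T)) := by
    by_contra hc
    exact hT (fun hg => absurd hg hc)
  obtain ⟨jd, hjd⟩ := (qbfPhi'_sat_iff hD d _).mp hT'
  rw [disjGF_sat_iff] at hjd
  refine ⟨jd, fun t3 => ?_⟩
  obtain ⟨-, hB, hC⟩ := hJ (0 + T)
  exact lit_true_of_g a b _ hB hC (d jd t3) (hjd t3)

end BackwardMain

/-! ### The forward direction: from truth of the QBF to a refuting assignment -/

section Forward

variable {m k D : ℕ} (d : Fin D → Fin 3 → (Fin m ⊕ Fin k) × Bool) (μ : Fin m → ℚ)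

/-- Weight of a location for a rank threshold `c`. -/
def wt (c : ℕ) : QLoc m k → ℕ := fun ℓ => if c < qrank ℓ then 1 else 0

theorem wt_le_one (c : ℕ) (ℓ : QLoc m k) : wt c ℓ ≤ 1 := by
  unfold wt; split <;> omega

/-- Rank of source vs destination for each rule. -/
theorem qrank_pairs (r : QRule m k D) :
    (∃ i : Fin m, i.val < m ∧ qrank (qbfRule d μ r).src = i.val ∧
        qrank (qbfRule d μ r).dst = i.val + 1) ∨
    (qrank (qbfRule d μ r).src = m ∧ qrank (qbfRule d μ r).dst = m + 1) ∨
    (∃ j : Fin k, qrank (qbfRule d μ r).src = m + 1 + 2 * j.val ∧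
        qrank (qbfRule d μ r).dst = m + 2 + 2 * j.val) ∨
    (∃ j : Fin k, qrank (qbfRule d μ r).src = m + 2 + 2 * j.val ∧
        qrank (qbfRule d μ r).dst = m + 3 + 2 * j.val) ∨
    (qrank (qbfRule d μ r).src = m + 1 + 2 * k ∧
        qrank (qbfRule d μ r).dst = m + 2 * k + 2) ∨
    ((r = rLY ∨ r = rLF) ∧ (qbfRule d μ r).src = (qbfRule d μ r).dst) := by
  rcases qrule_cases r with ⟨i, c, rfl⟩ | rfl | ⟨j, c, rfl⟩ | ⟨j, c, rfl⟩ | ⟨jd, rfl⟩ | rfl | rfl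
  · refine Or.inl ⟨i, i.isLt, ?_, ?_⟩
    · rw [rX_src]; simp [xLoc, qrank]
    · rw [rX_dst]; simp [xLoc, qrank]
  · refine Or.inr (Or.inl ⟨?_, ?_⟩)
    · show qrank (xLoc (m := m) (k := k) (Fin.last m)) = m
      simp [xLoc, qrank]
    · show qrank (yLoc (m := m) (k := k) 0) = m + 1
      simp [yLoc, qrank]
  · refine Or.inr (Or.inr (Or.inl ⟨j, ?_, ?_⟩))
    · show qrank (yLoc (m := m) (k := k) j.castSucc) = m + 1 + 2 * j.val
      simp [yLoc, qrank]
    · show qrank (zLoc (m := m) (k := k) j c) = m + 2 + 2 * j.val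
      simp [zLoc, qrank]
  · refine Or.inr (Or.inr (Or.inr (Or.inl ⟨j, ?_, ?_⟩)))
    · show qrank (zLoc (m := m) (k := k) j c) = m + 2 + 2 * j.val
      simp [zLoc, qrank]
    · show qrank (yLoc (m := m) (k := k) j.succ) = m + 3 + 2 * j.val
      simp [yLoc, qrank]; omega
  · refine Or.inr (Or.inr (Or.inr (Or.inr (Or.inl ⟨?_, ?_⟩))))
    · show qrank (yLoc (m := m) (k := k) (Fin.last k)) = m + 1 + 2 * k
      simp [yLoc, qrank]
    · show qrank (qFLoc : QLoc m k) = m + 2 * k + 2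
      simp [qFLoc, qrank]
  · exact Or.inr (Or.inr (Or.inr (Or.inr (Or.inr ⟨Or.inl rfl, rfl⟩))))
  · exact Or.inr (Or.inr (Or.inr (Or.inr (Or.inr ⟨Or.inr rfl, rfl⟩))))

theorem qrank_src_le_dst (r : QRule m k D) :
    qrank (qbfRule d μ r).src ≤ qrank (qbfRule d μ r).dst := by
  rcases qrank_pairs d μ r with ⟨i, _, h1, h2⟩ | ⟨h1, h2⟩ | ⟨j, h1, h2⟩ | ⟨j, h1, h2⟩ |
    ⟨h1, h2⟩ | ⟨-, h⟩ <;> first | omega | (rw [h])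

theorem qrank_src_lt_dst (r : QRule m k D) (h1 : r ≠ rLY) (h2 : r ≠ rLF) :
    qrank (qbfRule d μ r).src < qrank (qbfRule d μ r).dst := by
  rcases qrank_pairs d μ r with ⟨i, _, ha, hb⟩ | ⟨ha, hb⟩ | ⟨j, ha, hb⟩ | ⟨j, ha, hb⟩ |
    ⟨ha, hb⟩ | ⟨hr, -⟩
  · omega
  · omega
  · omega
  · omega
  · omega
  · rcases hr with rfl | rfl
    · exact absurd rfl h1
    · exact absurd rfl h2

variable (σ₀ : Config (QLoc m k) (QVar m k) Unit) (ρ : ℕ → QRule m k D)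

/-- The weighted potential `W`. -/
def Wpot (n : ℕ) : ℕ := ∑ ℓ, ((qbfTA d μ).run σ₀ ρ n).κ ℓ * qrank ℓ

theorem Wpot_step (happ : (qbfTA d μ).infApplicable σ₀ ρ) (n : ℕ) :
    Wpot d μ σ₀ ρ (n + 1) + qrank (qbfRule d μ (ρ n)).src
      = Wpot d μ σ₀ ρ n + qrank (qbfRule d μ (ρ n)).dst := by
  unfold Wpot
  rw [TA.run_succ]
  exact fire_sum _ _ (happ n).1 qrank

theorem Wpot_mono (happ : (qbfTA d μ).infApplicable σ₀ ρ) {n n' : ℕ} (h : n ≤ n') :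
    Wpot d μ σ₀ ρ n ≤ Wpot d μ σ₀ ρ n' := by
  induction n' with
  | zero => simp_all
  | succ n' ih =>
    rcases Nat.lt_or_ge n (n' + 1) with h' | h'
    · have h1 := ih (by omega)
      have h2 := Wpot_step d μ σ₀ ρ happ n'
      have h3 := qrank_src_le_dst d μ (ρ n')
      omega
    · have : n = n' + 1 := by omega
      subst this; exact le_refl _

theorem Wpot_bound (happ : (qbfTA d μ).infApplicable σ₀ ρ) (n : ℕ) :
    Wpot d μ σ₀ ρ n ≤ (∑ ℓ, σ₀.κ ℓ) * (m + 2 * k + 2) := by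
  have htot : ∀ n, (∑ ℓ, ((qbfTA d μ).run σ₀ ρ n).κ ℓ) = ∑ ℓ, σ₀.κ ℓ := by
    intro n
    induction n with
    | zero => rfl
    | succ n ih =>
      have := fire_sum ((qbfTA d μ).rule (ρ n)) ((qbfTA d μ).run σ₀ ρ n)
        (happ n).1 (fun _ => 1)
      simp only [mul_one] at this
      rw [TA.run_succ, ← ih]
      omega
  calc Wpot d μ σ₀ ρ n ≤ ∑ ℓ, ((qbfTA d μ).run σ₀ ρ n).κ ℓ * (m + 2 * k + 2) := by
        exact Finset.sum_le_sum fun ℓ _ => Nat.mul_le_mul_left _ (qrank_le ℓ)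
    _ = (∑ ℓ, ((qbfTA d μ).run σ₀ ρ n).κ ℓ) * (m + 2 * k + 2) := by
        rw [Finset.sum_mul]
    _ = (∑ ℓ, σ₀.κ ℓ) * (m + 2 * k + 2) := by rw [htot]

/-- Eventually only self-loops fire. -/
theorem eventually_loops (happ : (qbfTA d μ).infApplicable σ₀ ρ) :
    ∃ N₀, ∀ n, N₀ ≤ n → ρ n = rLY ∨ ρ n = rLF := by
  by_contra hc
  push_neg at hc
  have key : ∀ c : ℕ, ∃ n, c ≤ Wpot d μ σ₀ ρ n := by
    intro c
    induction c with
    | zero => exact ⟨0, Nat.zero_le _⟩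
    | succ c ih =>
      obtain ⟨n, hn⟩ := ih
      obtain ⟨n', hn'1, hn'2, hn'3⟩ := hc n
      have h1 := Wpot_mono d μ σ₀ ρ happ hn'1
      have h2 := Wpot_step d μ σ₀ ρ happ n'
      have h3 := qrank_src_lt_dst d μ (ρ n') hn'2 hn'3
      exact ⟨n' + 1, by omega⟩
  obtain ⟨n, hn⟩ := key ((∑ ℓ, σ₀.κ ℓ) * (m + 2 * k + 2) + 1)
  have := Wpot_bound d μ σ₀ ρ happ n
  omega

theorem base_sum_zero (hinit : (qbfTA d μ).isInitial σ₀) (c : ℕ) :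
    ∑ ℓ, σ₀.κ ℓ * wt c ℓ = 0 := by
  apply Finset.sum_eq_zero
  intro ℓ _
  by_cases hℓ : ℓ = xLoc 0
  · subst hℓ
    have hw : wt (m := m) (k := k) c (xLoc 0) = 0 := by
      unfold wt
      rw [if_neg]
      show ¬ c < qrank (xLoc (m := m) (k := k) 0)
      simp [xLoc, qrank]
    rw [hw, mul_zero]
  · rw [hinit.2.1 ℓ (by simpa [qbfTA] using hℓ), zero_mul]

/-- Counting invariant for the `x`-phase: the number of processes strictly past `ℓ_{x_i}`
is at most `b_i^{a(i)}`. -/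
theorem crossA (a : Fin m → Bool)
    (hinit : (qbfTA d (fun i => if a i then 1 else 0)).isInitial σ₀)
    (happ : (qbfTA d (fun i => if a i then 1 else 0)).infApplicable σ₀ ρ)
    (i : Fin m) (n : ℕ) :
    (∑ ℓ, ((qbfTA d (fun i => if a i then 1 else 0)).run σ₀ ρ n).κ ℓ * wt i.val ℓ)
      ≤ ((qbfTA d (fun i => if a i then 1 else 0)).run σ₀ ρ n).g (varB i (a i)) := by
  set μ' : Fin m → ℚ := fun i => if a i then 1 else 0 with hμ'
  induction n with
  | zero =>
    rw [TA.run_zero, base_sum_zero d μ' σ₀ hinit]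
    exact Nat.zero_le _
  | succ n ih =>
    have hid := fire_sum ((qbfTA d μ').rule (ρ n)) ((qbfTA d μ').run σ₀ ρ n)
      (happ n).1 (wt i.val)
    have hg : ((qbfTA d μ').run σ₀ ρ (n + 1)).g (varB i (a i))
        = ((qbfTA d μ').run σ₀ ρ n).g (varB i (a i))
          + (qbfRule d μ' (ρ n)).upd (varB i (a i)) := by
      rw [TA.run_succ]; rfl
    have hkey : wt i.val (qbfRule d μ' (ρ n)).dst
        ≤ wt i.val (qbfRule d μ' (ρ n)).src + (qbfRule d μ' (ρ n)).upd (varB i (a i)) := by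
      rcases qrule_cases (ρ n) with ⟨i', c, hr⟩ | hr | ⟨j', c, hr⟩ | ⟨j', c, hr⟩ |
        ⟨jd, hr⟩ | hr | hr
      · by_cases hii : i' = i
        · subst hii
          -- the crossing rule; the branch is forced to be `a i'`
          have hen := happ n
          rw [hr] at hen
          have hc : c = a i' := by
            refine rX_enabled_forces d a i' c _ ?_ ?_ hen
            · exact run_g_varA d μ' σ₀ (hinit.2.2 varA) ρ n
            · rw [TA.run_p]; exact hinit.1.1
          subst hc
          have hupd : (qbfRule d μ' (ρ n)).upd (varB i' (a i')) = 1 := by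
            rw [hr, rX_upd]; simp [unitUpd]
          rw [hupd]
          have := wt_le_one (m := m) (k := k) i'.val (qbfRule d μ' (ρ n)).dst
          omega
        · rw [hr]
          have hne : i.val ≠ i'.val := fun h => hii (Fin.ext h.symm)
          have h1 : qrank (qbfRule d μ' (rX i' c)).src = i'.val := by
            rw [rX_src]; simp [xLoc, qrank]
          have h2 : qrank (qbfRule d μ' (rX i' c)).dst = i'.val + 1 := by
            rw [rX_dst]; simp [xLoc, qrank]
          unfold wt
          rw [h1, h2]
          split_ifs <;> omega
      · rw [hr]
        have h1 : qrank (qbfRule d μ' (rT : QRule m k D)).src = m := by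
          show qrank (xLoc (m := m) (k := k) (Fin.last m)) = m
          simp [xLoc, qrank]
        have h2 : qrank (qbfRule d μ' (rT : QRule m k D)).dst = m + 1 := by
          show qrank (yLoc (m := m) (k := k) 0) = m + 1
          simp [yLoc, qrank]
        have := i.isLt
        unfold wt
        rw [h1, h2]
        split_ifs <;> omega
      · rw [hr]
        have h1 : qrank (qbfRule d μ' (rS j' c)).src = m + 1 + 2 * j'.val := by
          show qrank (yLoc (m := m) (k := k) j'.castSucc) = m + 1 + 2 * j'.val
          simp [yLoc, qrank]
        have h2 : qrank (qbfRule d μ' (rS j' c)).dst = m + 2 + 2 * j'.val := by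
          show qrank (zLoc (m := m) (k := k) j' c) = m + 2 + 2 * j'.val
          simp [zLoc, qrank]
        have := i.isLt
        unfold wt
        rw [h1, h2]
        split_ifs <;> omega
      · rw [hr]
        have h1 : qrank (qbfRule d μ' (rP j' c)).src = m + 2 + 2 * j'.val := by
          show qrank (zLoc (m := m) (k := k) j' c) = m + 2 + 2 * j'.val
          simp [zLoc, qrank]
        have h2 : qrank (qbfRule d μ' (rP j' c)).dst = m + 3 + 2 * j'.val := by
          show qrank (yLoc (m := m) (k := k) j'.succ) = m + 3 + 2 * j'.val
          simp [yLoc, qrank]; omega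
        have := i.isLt
        unfold wt
        rw [h1, h2]
        split_ifs <;> omega
      · rw [hr]
        have h1 : qrank (qbfRule d μ' (rD jd)).src = m + 1 + 2 * k := by
          show qrank (yLoc (m := m) (k := k) (Fin.last k)) = m + 1 + 2 * k
          simp [yLoc, qrank]
        have h2 : qrank (qbfRule d μ' (rD jd)).dst = m + 2 * k + 2 := by
          show qrank (qFLoc : QLoc m k) = m + 2 * k + 2
          simp [qFLoc, qrank]
        have := i.isLt
        unfold wt
        rw [h1, h2]
        split_ifs <;> omega
      · rw [hr]
        show wt i.val (yLoc (Fin.last k)) ≤ wt i.val (yLoc (Fin.last k)) + _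
        omega
      · rw [hr]
        show wt i.val (qFLoc : QLoc m k) ≤ wt i.val (qFLoc : QLoc m k) + _
        omega
    have hS : (∑ ℓ, ((qbfTA d μ').run σ₀ ρ (n + 1)).κ ℓ * wt i.val ℓ)
        + wt i.val (qbfRule d μ' (ρ n)).src
        = (∑ ℓ, ((qbfTA d μ').run σ₀ ρ n).κ ℓ * wt i.val ℓ)
          + wt i.val (qbfRule d μ' (ρ n)).dst := by
      rw [TA.run_succ] at *
      exact hid
    omega

/-- Counting invariant for the `y`-phase: the number of processes strictly past
`ℓ_{y_{j-1}}` is at most `c_j + c̄_j`. -/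
theorem crossB (happ : (qbfTA d μ).infApplicable σ₀ ρ)
    (hinit : (qbfTA d μ).isInitial σ₀) (j : Fin k) (n : ℕ) :
    (∑ ℓ, ((qbfTA d μ).run σ₀ ρ n).κ ℓ * wt (m + 1 + 2 * j.val) ℓ)
      ≤ ((qbfTA d μ).run σ₀ ρ n).g (varCq j true)
        + ((qbfTA d μ).run σ₀ ρ n).g (varCq j false) := by
  induction n with
  | zero =>
    rw [TA.run_zero, base_sum_zero d μ σ₀ hinit]
    exact Nat.zero_le _
  | succ n ih =>
    have hid := fire_sum ((qbfTA d μ).rule (ρ n)) ((qbfTA d μ).run σ₀ ρ n)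
      (happ n).1 (wt (m + 1 + 2 * j.val))
    have hgT : ((qbfTA d μ).run σ₀ ρ (n + 1)).g (varCq j true)
        = ((qbfTA d μ).run σ₀ ρ n).g (varCq j true)
          + (qbfRule d μ (ρ n)).upd (varCq j true) := by
      rw [TA.run_succ]; rfl
    have hgF : ((qbfTA d μ).run σ₀ ρ (n + 1)).g (varCq j false)
        = ((qbfTA d μ).run σ₀ ρ n).g (varCq j false)
          + (qbfRule d μ (ρ n)).upd (varCq j false) := by
      rw [TA.run_succ]; rfl
    have hkey : wt (m + 1 + 2 * j.val) (qbfRule d μ (ρ n)).dst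
        ≤ wt (m + 1 + 2 * j.val) (qbfRule d μ (ρ n)).src
          + ((qbfRule d μ (ρ n)).upd (varCq j true)
            + (qbfRule d μ (ρ n)).upd (varCq j false)) := by
      rcases qrule_cases (ρ n) with ⟨i', c, hr⟩ | hr | ⟨j', c, hr⟩ | ⟨j', c, hr⟩ |
        ⟨jd, hr⟩ | hr | hr
      · rw [hr]
        have h1 : qrank (qbfRule d μ (rX i' c)).src = i'.val := by
          rw [rX_src]; simp [xLoc, qrank]
        have h2 : qrank (qbfRule d μ (rX i' c)).dst = i'.val + 1 := by
          rw [rX_dst]; simp [xLoc, qrank]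
        have := i'.isLt
        unfold wt
        rw [h1, h2]
        split_ifs <;> omega
      · rw [hr]
        have h1 : qrank (qbfRule d μ (rT : QRule m k D)).src = m := by
          show qrank (xLoc (m := m) (k := k) (Fin.last m)) = m
          simp [xLoc, qrank]
        have h2 : qrank (qbfRule d μ (rT : QRule m k D)).dst = m + 1 := by
          show qrank (yLoc (m := m) (k := k) 0) = m + 1
          simp [yLoc, qrank]
        unfold wt
        rw [h1, h2]
        split_ifs <;> omega
      · by_cases hjj : j' = j
        · subst hjj
          -- the crossing rule increments `c_{j'}` or `c̄_{j'}`
          rw [hr]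
          have h1 : qrank (qbfRule d μ (rS j' c)).src = m + 1 + 2 * j'.val := by
            show qrank (yLoc (m := m) (k := k) j'.castSucc) = m + 1 + 2 * j'.val
            simp [yLoc, qrank]
          have h2 : qrank (qbfRule d μ (rS j' c)).dst = m + 2 + 2 * j'.val := by
            show qrank (zLoc (m := m) (k := k) j' c) = m + 2 + 2 * j'.val
            simp [zLoc, qrank]
          have hupd : (qbfRule d μ (rS j' c)).upd (varCq j' true)
              + (qbfRule d μ (rS j' c)).upd (varCq j' false) = 1 := by
            show unitUpd (varCq j' c) (varCq j' true) + unitUpd (varCq j' c) (varCq j' false) = 1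
            cases c <;> simp [unitUpd, varCq]
          rw [hupd]
          unfold wt
          rw [h1, h2]
          split_ifs <;> omega
        · rw [hr]
          have hne : j.val ≠ j'.val := fun h => hjj (Fin.ext h.symm)
          have h1 : qrank (qbfRule d μ (rS j' c)).src = m + 1 + 2 * j'.val := by
            show qrank (yLoc (m := m) (k := k) j'.castSucc) = m + 1 + 2 * j'.val
            simp [yLoc, qrank]
          have h2 : qrank (qbfRule d μ (rS j' c)).dst = m + 2 + 2 * j'.val := by
            show qrank (zLoc (m := m) (k := k) j' c) = m + 2 + 2 * j'.val
            simp [zLoc, qrank]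
          unfold wt
          rw [h1, h2]
          split_ifs <;> omega
      · rw [hr]
        have h1 : qrank (qbfRule d μ (rP j' c)).src = m + 2 + 2 * j'.val := by
          show qrank (zLoc (m := m) (k := k) j' c) = m + 2 + 2 * j'.val
          simp [zLoc, qrank]
        have h2 : qrank (qbfRule d μ (rP j' c)).dst = m + 3 + 2 * j'.val := by
          show qrank (yLoc (m := m) (k := k) j'.succ) = m + 3 + 2 * j'.val
          simp [yLoc, qrank]; omega
        unfold wt
        rw [h1, h2]
        split_ifs <;> omega
      · rw [hr]
        have h1 : qrank (qbfRule d μ (rD jd)).src = m + 1 + 2 * k := by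
          show qrank (yLoc (m := m) (k := k) (Fin.last k)) = m + 1 + 2 * k
          simp [yLoc, qrank]
        have h2 : qrank (qbfRule d μ (rD jd)).dst = m + 2 * k + 2 := by
          show qrank (qFLoc : QLoc m k) = m + 2 * k + 2
          simp [qFLoc, qrank]
        have := j.isLt
        unfold wt
        rw [h1, h2]
        split_ifs <;> omega
      · rw [hr]
        show wt _ (yLoc (Fin.last k)) ≤ wt _ (yLoc (Fin.last k)) + _
        omega
      · rw [hr]
        show wt _ (qFLoc : QLoc m k) ≤ wt _ (qFLoc : QLoc m k) + _
        omega
    have hS : (∑ ℓ, ((qbfTA d μ).run σ₀ ρ (n + 1)).κ ℓ * wt (m + 1 + 2 * j.val) ℓ)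
        + wt (m + 1 + 2 * j.val) (qbfRule d μ (ρ n)).src
        = (∑ ℓ, ((qbfTA d μ).run σ₀ ρ n).κ ℓ * wt (m + 1 + 2 * j.val) ℓ)
          + wt (m + 1 + 2 * j.val) (qbfRule d μ (ρ n)).dst := by
      rw [TA.run_succ] at *
      exact hid
    omega

end Forward

section ForwardMain

variable {m k D : ℕ}

theorem g_of_lit_true (a : Fin m → Bool) (b : Fin k → Bool) (g : QVar m k → ℕ)
    (hA : ∀ i, 1 ≤ g (varB i (a i)))
    (hbT : ∀ j, b j = true → 1 ≤ g (varCq j true))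
    (hbF : ∀ j, b j = false → 1 ≤ g (varCq j false))
    (l : (Fin m ⊕ Fin k) × Bool) (h : qlitVal a b l) : 1 ≤ g (litVar l) := by
  obtain ⟨s, pol⟩ := l
  cases s with
  | inl i =>
    have hai : a i = pol := h
    show 1 ≤ g (varB i pol)
    rw [← hai]
    exact hA i
  | inr j =>
    have hbj : b j = pol := h
    show 1 ≤ g (varCq j pol)
    cases pol
    · exact hbF j hbj
    · exact hbT j hbj

theorem forward_main (d : Fin D → Fin 3 → (Fin m ⊕ Fin k) × Bool) (hD : 0 < D)
    (a : Fin m → Bool)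
    (hqa : ∀ b : Fin k → Bool, ∃ jd : Fin D, ∀ t : Fin 3, qlitVal a b (d jd t)) :
    qbfSpecRefuted hD d (fun i => if a i then 1 else 0) := by
  classical
  intro σ₀ hinit ρ happ hsat
  set μ' : Fin m → ℚ := fun i => if a i then 1 else 0 with hμ'
  obtain ⟨hψ1, hψ2⟩ := hsat
  have hqF : ∀ n, ((qbfTA d μ').run σ₀ ρ n).κ qFLoc = 0 := fun n => hψ2 n qFLoc rfl
  obtain ⟨N₀, hN₀⟩ := eventually_loops d μ' σ₀ ρ happ
  have hLY : ∀ n, N₀ ≤ n → ρ n = rLY := by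
    intro n hn
    rcases hN₀ n hn with h | h
    · exact h
    · exfalso
      have hen := happ n
      rw [h] at hen
      have h2 : 0 < ((qbfTA d μ').run σ₀ ρ n).κ qFLoc := hen.1
      rw [hqF n] at h2
      exact lt_irrefl 0 h2
  have hconst : ∀ n, N₀ ≤ n → (qbfTA d μ').run σ₀ ρ n = (qbfTA d μ').run σ₀ ρ N₀ := by
    intro n hn
    induction n with
    | zero =>
      have : N₀ = 0 := by omega
      rw [this]
    | succ n ih =>
      rcases Nat.lt_or_ge n (N₀ : ℕ) with h' | h'
      · have : N₀ = n + 1 := by omega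
        rw [this]
      · rw [TA.run_succ, hLY n h',
          fire_self ((qbfTA d μ').rule rLY) _ rfl (fun v => rfl)]
        exact ih h'
  have hyk : 0 < ((qbfTA d μ').run σ₀ ρ N₀).κ (yLoc (Fin.last k)) := by
    have hen := happ N₀
    rw [hLY N₀ (le_refl _)] at hen
    exact hen.1
  set σs := (qbfTA d μ').run σ₀ ρ N₀ with hσs
  have hA : ∀ i : Fin m, 1 ≤ σs.g (varB i (a i)) := by
    intro i
    have hinv := crossA d σ₀ ρ a hinit happ i N₀
    rw [← hμ'] at hinv
    rw [← hσs] at hinv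
    have hsingle : σs.κ (yLoc (Fin.last k)) * wt i.val (yLoc (Fin.last k))
        ≤ ∑ ℓ, σs.κ ℓ * wt i.val ℓ :=
      Finset.single_le_sum (f := fun ℓ => σs.κ ℓ * wt i.val ℓ)
        (fun ℓ _ => Nat.zero_le _) (Finset.mem_univ _)
    have hw : wt (m := m) (k := k) i.val (yLoc (Fin.last k)) = 1 := by
      unfold wt
      rw [if_pos]
      show i.val < qrank (yLoc (m := m) (k := k) (Fin.last k))
      have := i.isLt
      simp only [yLoc, qrank, Fin.val_last]
      omega
    rw [hw, mul_one] at hsingle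
    omega
  have hBsum : ∀ j : Fin k, 1 ≤ σs.g (varCq j true) + σs.g (varCq j false) := by
    intro j
    have hinv := crossB d μ' σ₀ ρ happ hinit j N₀
    rw [← hσs] at hinv
    have hsingle : σs.κ (yLoc (Fin.last k)) * wt (m + 1 + 2 * j.val) (yLoc (Fin.last k))
        ≤ ∑ ℓ, σs.κ ℓ * wt (m + 1 + 2 * j.val) ℓ :=
      Finset.single_le_sum (f := fun ℓ => σs.κ ℓ * wt (m + 1 + 2 * j.val) ℓ)
        (fun ℓ _ => Nat.zero_le _) (Finset.mem_univ _)
    have hw : wt (m := m) (k := k) (m + 1 + 2 * j.val) (yLoc (Fin.last k)) = 1 := by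
      unfold wt
      rw [if_pos]
      show m + 1 + 2 * j.val < qrank (yLoc (m := m) (k := k) (Fin.last k))
      have := j.isLt
      simp only [yLoc, qrank, Fin.val_last]
      omega
    rw [hw, mul_one] at hsingle
    omega
  set b : Fin k → Bool := fun j => decide (1 ≤ σs.g (varCq j true)) with hb
  obtain ⟨jd, hjd⟩ := hqa b
  have hφ' : GF.sat (qbfPhi' hD d) σs := by
    rw [qbfPhi'_sat_iff]
    refine ⟨jd, (disjGF_sat_iff d jd σs).mpr fun t3 => ?_⟩
    refine g_of_lit_true a b σs.g hA ?_ ?_ (d jd t3) (hjd t3)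
    · intro j hj
      rw [hb] at hj
      exact of_decide_eq_true hj
    · intro j hj
      have hnT : ¬ 1 ≤ σs.g (varCq j true) := by
        intro hc
        rw [hb] at hj
        simp only [decide_eq_false_iff_not] at hj
        exact hj hc
      have := hBsum j
      omega
  obtain ⟨n1, hn1⟩ := hψ1
  have heq : (qbfTA d μ').run σ₀ ρ (n1 + N₀) = σs := hconst (n1 + N₀) (by omega)
  have h1 : GF.sat (qbfPhi' hD d) ((qbfTA d μ').run σ₀ ρ (n1 + N₀)) := by
    rw [heq]; exact hφ'
  have h2 := hn1 N₀ h1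
  have h3 : σs.κ (yLoc (Fin.last k)) = 0 := by
    have h4 : ((qbfTA d μ').run σ₀ ρ (n1 + (N₀ + 0))).κ (yLoc (Fin.last k)) = 0 := h2 _ rfl
    rw [hconst (n1 + (N₀ + 0)) (by omega)] at h4
    exact h4
  omega

end ForwardMain

/-- `∃x ∀y φ(x,y)` is true iff there is an assignment `μ` to the indeterminates such that
every infinite path of `TA[μ]` from an initial configuration satisfies `¬ψ`; moreover, in
that case `μ` can be taken with values in `{0, 1}`. -/
theorem qbf_iff_synthesis {m k D : ℕ} (hD : 0 < D)
    (d : Fin D → Fin 3 → (Fin m ⊕ Fin k) × Bool) :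
    (qbfTrue d ↔ ∃ μ : Fin m → ℚ, qbfSpecRefuted hD d μ) ∧
    (qbfTrue d → ∃ μ : Fin m → ℚ, (∀ i, μ i = 0 ∨ μ i = 1) ∧ qbfSpecRefuted hD d μ) := by
  constructor
  · constructor
    · intro h
      obtain ⟨a, ha⟩ := h
      exact ⟨_, forward_main d hD a ha⟩
    · rintro ⟨μ, hμ⟩
      exact backward_main d μ hD hμ
  · intro h
    obtain ⟨a, ha⟩ := h
    refine ⟨fun i => if a i then 1 else 0, fun i => ?_, forward_main d hD a ha⟩
    cases a i <;> simp
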